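/- arXiv:1607.08024 — 2 statements merged into one kernel-verified Lean document; each statement's English description precedes it below -/
import Mathlib

section
/- If (R,B,L) is a Hadamard triple, then for every k ≥ 1, the triple (R^k, B_k, L_k^T) is a Hadamard triple, where B_k = B + RB + ⋯ + R^{k-1}B and L_k^T = L + R^T L + ⋯ + (R^T)^{k-1}L. -/
open scoped BigOperators ENNReal
open Matrix MeasureTheory

noncomputable section

/-- Cast of an integer matrix to a real matrix. -/
def mR {d : ℕ} (R : Matrix (Fin d) (Fin d) ℤ) : Matrix (Fin d) (Fin d) ℝ :=
  R.map (Int.cast : ℤ → ℝ)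

/-- Cast of an integer vector to a real vector. -/
def vR {d : ℕ} (b : Fin d → ℤ) : Fin d → ℝ := fun i => (b i : ℝ)

/-- The standard inner product on ℝ^d. -/
def ip {d : ℕ} (x y : Fin d → ℝ) : ℝ := ∑ i, x i * y i

/-- A matrix is expansive if all of its complex eigenvalues have modulus > 1. -/
def Expansive {d : ℕ} (R : Matrix (Fin d) (Fin d) ℤ) : Prop :=
  ∀ z ∈ spectrum ℂ (R.map (Int.cast : ℤ → ℂ)), 1 < ‖z‖

/-- The matrix H = (1/√N)[e^{2πi⟨S⁻¹ a, ℓ⟩}]_{ℓ ∈ L, a ∈ A}. -/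
def hMatrix {d : ℕ} (S : Matrix (Fin d) (Fin d) ℤ) (A L : Finset (Fin d → ℤ)) :
    Matrix L A ℂ := fun ℓ a =>
  ((1 / Real.sqrt (A.card) : ℝ) : ℂ) *
    Complex.exp (2 * (Real.pi : ℂ) * Complex.I *
      ((ip ((mR S)⁻¹.mulVec (vR (a : Fin d → ℤ))) (vR (ℓ : Fin d → ℤ)) : ℝ) : ℂ))

/-- (S, A, L) is a Hadamard triple: #A = #L and the matrix H is unitary (H* H = 1). -/
def IsHadamardTriple {d : ℕ} (S : Matrix (Fin d) (Fin d) ℤ) (A L : Finset (Fin d → ℤ)) : Prop :=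
  A.card = L.card ∧ (hMatrix S A L)ᴴ * hMatrix S A L = 1

/-- B is a simple digit set for R: distinct elements are incongruent mod R(ℤ^d). -/
def SimpleDigits {d : ℕ} (R : Matrix (Fin d) (Fin d) ℤ) (B : Finset (Fin d → ℤ)) : Prop :=
  ∀ b ∈ B, ∀ b' ∈ B, (∃ k : Fin d → ℤ, b - b' = R.mulVec k) → b = b'

/-- Bb is a complete set of representatives modulo R(ℤ^d). -/
def CompleteResidues {d : ℕ} (R : Matrix (Fin d) (Fin d) ℤ) (Bb : Finset (Fin d → ℤ)) : Prop :=
  SimpleDigits R Bb ∧ ∀ x : Fin d → ℤ, ∃ b ∈ Bb, ∃ k : Fin d → ℤ, x = b + R.mulVec k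

/-- B_k = B + RB + ⋯ + R^{k-1}B. -/
def Bk {d : ℕ} (R : Matrix (Fin d) (Fin d) ℤ) (B : Finset (Fin d → ℤ)) (k : ℕ) :
    Finset (Fin d → ℤ) :=
  (Fintype.piFinset (fun _ : Fin k => B)).image
    (fun b => ∑ j : Fin k, (R ^ (j : ℕ)).mulVec (b j))

/-- The element of B_n associated to a word b ∈ B^n. -/
def beta {d : ℕ} (R : Matrix (Fin d) (Fin d) ℤ) {n : ℕ} (b : Fin n → (Fin d → ℤ)) :
    Fin d → ℤ := ∑ j : Fin n, (R ^ (j : ℕ)).mulVec (b j)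

/-- τ_b(x) = R⁻¹(x + b). -/
def tau {d : ℕ} (R : Matrix (Fin d) (Fin d) ℤ) (b : Fin d → ℤ) (x : Fin d → ℝ) : Fin d → ℝ :=
  (mR R)⁻¹.mulVec (x + vR b)

/-- τ at level n: x ↦ R^{-n}(x + b); the composition τ_{b_1}∘⋯∘τ_{b_n} equals
`tauN R n (beta R b)` under the identification of words with digits in B_n. -/
def tauN {d : ℕ} (R : Matrix (Fin d) (Fin d) ℤ) (n : ℕ) (b : Fin d → ℤ) (x : Fin d → ℝ) :
    Fin d → ℝ := ((mR R) ^ n)⁻¹.mulVec (x + vR b)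

/-- T is the attractor T(R,B): the (unique) nonempty compact set with T = ⋃_b τ_b(T). -/
def IsAttractor {d : ℕ} (R : Matrix (Fin d) (Fin d) ℤ) (B : Finset (Fin d → ℤ))
    (T : Set (Fin d → ℝ)) : Prop :=
  T.Nonempty ∧ IsCompact T ∧ T = ⋃ b ∈ B, tau R b '' T

/-- μ is the equal-weight self-affine measure: μ = (1/N) Σ_b μ ∘ τ_b⁻¹. -/
def IsSelfAffine {d : ℕ} (R : Matrix (Fin d) (Fin d) ℤ) (B : Finset (Fin d → ℤ))
    (μ : Measure (Fin d → ℝ)) : Prop :=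
  μ = (B.card : ℝ≥0∞)⁻¹ • ∑ b ∈ B, μ.map (tau R b)

/-- The no-overlap condition. -/
def NoOverlap {d : ℕ} (R : Matrix (Fin d) (Fin d) ℤ) (B : Finset (Fin d → ℤ))
    (μ : Measure (Fin d → ℝ)) (T : Set (Fin d → ℝ)) : Prop :=
  ∀ b ∈ B, ∀ b' ∈ B, b ≠ b' → μ (tau R b '' T ∩ tau R b' '' T) = 0

/-- The Fourier transform μ̂(ξ) = ∫ e^{-2πi⟨ξ,x⟩} dμ(x). -/
def ft {d : ℕ} (μ : Measure (Fin d → ℝ)) (ξ : Fin d → ℝ) : ℂ :=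
  ∫ x, Complex.exp (-(2 * (Real.pi : ℂ) * Complex.I * ((ip ξ x : ℝ) : ℂ))) ∂μ

/-- M_B(ξ) = (1/N) Σ_{b∈B} e^{-2πi⟨b,ξ⟩}. -/
def maskB {d : ℕ} (B : Finset (Fin d → ℤ)) (ξ : Fin d → ℝ) : ℂ :=
  (B.card : ℂ)⁻¹ *
    ∑ b ∈ B, Complex.exp (-(2 * (Real.pi : ℂ) * Complex.I * ((ip (vR b) ξ : ℝ) : ℂ)))

/-- M_{B_n}(ξ) = (1/N^n) Σ_{b∈B_n} e^{-2πi⟨b,ξ⟩} (summed over words). -/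
def maskBn {d : ℕ} (R : Matrix (Fin d) (Fin d) ℤ) (B : Finset (Fin d → ℤ)) (n : ℕ)
    (ξ : Fin d → ℝ) : ℂ :=
  ((B.card : ℂ) ^ n)⁻¹ * ∑ b ∈ Fintype.piFinset (fun _ : Fin n => B),
    Complex.exp (-(2 * (Real.pi : ℂ) * Complex.I * ((ip (vR (beta R b)) ξ : ℝ) : ℂ)))

/-- u_B(x) = |(1/N) Σ_{b∈B} e^{2πi⟨b,x⟩}|². -/
def uB {d : ℕ} (B : Finset (Fin d → ℤ)) (x : Fin d → ℝ) : ℝ :=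
  ‖(B.card : ℂ)⁻¹ *
    ∑ b ∈ B, Complex.exp (2 * (Real.pi : ℂ) * Complex.I * ((ip (vR b) x : ℝ) : ℂ))‖ ^ 2

/-- Σ_{λ∈J} |N^{-n/2} Σ_{b∈B_n} w_b e^{-2πi⟨R^{-n}b,λ⟩}|². -/
def frameSum {d : ℕ} (R : Matrix (Fin d) (Fin d) ℤ) (B : Finset (Fin d → ℤ)) (n : ℕ)
    (J : Finset (Fin d → ℤ)) (w : (Fin d → ℤ) → ℂ) : ℝ :=
  ∑ lam ∈ J, ‖((1 / Real.sqrt ((B.card : ℝ) ^ n) : ℝ) : ℂ) *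
    ∑ b ∈ Bk R B n, w b * Complex.exp (-(2 * (Real.pi : ℂ) * Complex.I *
      ((ip (((mR R) ^ n)⁻¹.mulVec (vR b)) (vR lam) : ℝ) : ℂ)))‖ ^ 2

/-- The almost-Parseval-frame inequality at level n with constant ε and frequency set J. -/
def APF {d : ℕ} (R : Matrix (Fin d) (Fin d) ℤ) (B : Finset (Fin d → ℤ)) (n : ℕ)
    (J : Finset (Fin d → ℤ)) (ε : ℝ) : Prop :=
  ∀ w : (Fin d → ℤ) → ℂ,
    (1 - ε) * (∑ b ∈ Bk R B n, ‖w b‖ ^ 2) ≤ frameSum R B n J w ∧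
    frameSum R B n J w ≤ (1 + ε) * (∑ b ∈ Bk R B n, ‖w b‖ ^ 2)

section Aux

open Finset

namespace HTaux

/-- e^{2πit} -/
noncomputable def E (t : ℝ) : ℂ := Complex.exp (2 * (Real.pi : ℂ) * Complex.I * (t : ℂ))

lemma E_add (s t : ℝ) : E (s + t) = E s * E t := by
  unfold E; rw [← Complex.exp_add]; congr 1; push_cast; ring

lemma E_zero : E 0 = 1 := by unfold E; simp

lemma E_int (n : ℤ) : E (n : ℝ) = 1 := by
  unfold E
  rw [show (2 * (Real.pi : ℂ) * Complex.I * (((n : ℤ) : ℝ) : ℂ))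
      = (n : ℤ) * (2 * (Real.pi : ℂ) * Complex.I) by push_cast; ring]
  exact Complex.exp_int_mul_two_pi_mul_I n

lemma star_E (t : ℝ) : star (E t) = E (-t) := by
  unfold E
  rw [show star (Complex.exp (2 * (Real.pi:ℂ) * Complex.I * (t:ℂ)))
      = (starRingEnd ℂ) (Complex.exp (2 * (Real.pi:ℂ) * Complex.I * (t:ℂ))) from rfl,
    ← Complex.exp_conj]
  congr 1
  simp only [_root_.map_mul, Complex.conj_ofReal, Complex.conj_I, map_ofNat]
  push_cast; ring

lemma E_sum {ι : Type*} (s : Finset ι) (f : ι → ℝ) :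
    E (∑ i ∈ s, f i) = ∏ i ∈ s, E (f i) := by
  classical
  induction s using Finset.cons_induction with
  | empty => simp [E_zero]
  | cons a s ha ih => rw [Finset.sum_cons, Finset.prod_cons, E_add, ih]

variable {d : ℕ}

lemma ip_eq (x y : Fin d → ℝ) : ip x y = x ⬝ᵥ y := rfl

lemma ip_sum_right {ι : Type*} (s : Finset ι) (x : Fin d → ℝ) (y : ι → Fin d → ℝ) :
    ip x (∑ m ∈ s, y m) = ∑ m ∈ s, ip x (y m) := by
  simp only [ip, Finset.sum_apply, Finset.mul_sum]
  exact Finset.sum_comm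

lemma vR_sub (x y : Fin d → ℤ) : vR (x - y) = vR x - vR y := by
  funext i; simp [vR]

lemma vR_zero : vR (0 : Fin d → ℤ) = 0 := by funext i; simp [vR]

lemma vR_sum {ι : Type*} (s : Finset ι) (f : ι → Fin d → ℤ) :
    vR (∑ j ∈ s, f j) = ∑ j ∈ s, vR (f j) := by
  funext i; simp [vR, Finset.sum_apply]

lemma vR_mulVec (M : Matrix (Fin d) (Fin d) ℤ) (v : Fin d → ℤ) :
    vR (M.mulVec v) = (mR M).mulVec (vR v) := by
  funext i
  simp only [vR, mR, Matrix.mulVec, dotProduct, Matrix.map_apply]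
  push_cast; rfl

lemma vR_inj (x y : Fin d → ℤ) (h : vR x = vR y) : x = y := by
  funext i
  have := congrFun h i
  simp only [vR] at this
  exact_mod_cast this

lemma ip_int (x y : Fin d → ℤ) : ip (vR x) (vR y) = ((x ⬝ᵥ y : ℤ) : ℝ) := by
  simp only [ip, vR, dotProduct]; push_cast; rfl

lemma mR_pow (M : Matrix (Fin d) (Fin d) ℤ) (n : ℕ) : mR (M ^ n) = (mR M) ^ n := by
  simpa [mR, RingHom.mapMatrix_apply] using map_pow (Int.castRingHom ℝ).mapMatrix M n

lemma mR_transpose (M : Matrix (Fin d) (Fin d) ℤ) : mR Mᵀ = (mR M)ᵀ := rfl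

lemma ip_tmul (A : Matrix (Fin d) (Fin d) ℝ) (x y : Fin d → ℝ) :
    ip x (Aᵀ.mulVec y) = ip (A.mulVec x) y := by
  rw [ip_eq, ip_eq, Matrix.dotProduct_mulVec, Matrix.vecMul_transpose]

lemma ip_transpose_inv (R : Matrix (Fin d) (Fin d) ℤ) (x y : Fin d → ℝ) :
    ip ((mR Rᵀ)⁻¹.mulVec x) y = ip ((mR R)⁻¹.mulVec y) x := by
  rw [mR_transpose, ← Matrix.transpose_nonsing_inv, ip_eq, ip_eq,
    Matrix.mulVec_transpose, ← Matrix.dotProduct_mulVec, dotProduct_comm]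

lemma expansive_isUnit_det (R : Matrix (Fin d) (Fin d) ℤ) (hR : Expansive R) :
    IsUnit (mR R).det := by
  by_contra hdet
  have h0 : ¬ IsUnit (R.map (Int.cast : ℤ → ℂ)) := by
    rw [Matrix.isUnit_iff_isUnit_det]
    have hmap : R.map (Int.cast : ℤ → ℂ) = (mR R).map (Complex.ofRealHom) := by
      ext i j; simp [mR, Matrix.map_apply]
    rw [hmap, show ((mR R).map Complex.ofRealHom).det
        = Complex.ofRealHom (mR R).det from
        (RingHom.map_det Complex.ofRealHom (mR R)).symm]
    rw [isUnit_iff_ne_zero] at hdet ⊢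
    simpa using hdet
  have := hR 0 (spectrum.zero_mem_iff ℂ |>.mpr h0)
  norm_num at this

lemma mulVec_int_injective (R : Matrix (Fin d) (Fin d) ℤ) (hdet : IsUnit (mR R).det) :
    Function.Injective (fun v : Fin d → ℤ => R.mulVec v) := by
  intro x y hxy
  haveI := Matrix.invertibleOfIsUnitDet _ hdet
  have hxy' : R.mulVec x = R.mulVec y := hxy
  have h2 : (mR R).mulVec (vR x) = (mR R).mulVec (vR y) := by
    rw [← vR_mulVec, ← vR_mulVec, hxy']
  exact vR_inj _ _ (Matrix.mulVec_injective_of_invertible (mR R) h2)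

end HTaux

end Aux

namespace HTaux

variable {d : ℕ}

/-- Column orthogonality extracted from a Hadamard triple. -/
lemma orth (R : Matrix (Fin d) (Fin d) ℤ) (B L : Finset (Fin d → ℤ))
    (h : IsHadamardTriple R B L) :
    ∀ b ∈ B, ∀ b' ∈ B, b ≠ b' →
      ∑ ℓ ∈ L, E (ip ((mR R)⁻¹.mulVec (vR b' - vR b)) (vR ℓ)) = 0 := by
  intro b hb b' hb' hne
  have hBpos : (0 : ℝ) < Real.sqrt B.card := by
    have : 0 < B.card := Finset.card_pos.mpr ⟨b, hb⟩
    positivity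
  have key := congrFun (congrFun h.2 ⟨b, hb⟩) ⟨b', hb'⟩
  rw [Matrix.mul_apply, Matrix.one_apply_ne (by simpa [Subtype.ext_iff] using hne)] at key
  set c : ℂ := ((1 / Real.sqrt B.card : ℝ) : ℂ) with hc
  have hterm : ∀ ℓ : {x // x ∈ L},
      (hMatrix R B L)ᴴ ⟨b, hb⟩ ℓ * hMatrix R B L ℓ ⟨b', hb'⟩
        = c ^ 2 * E (ip ((mR R)⁻¹.mulVec (vR b' - vR b)) (vR (ℓ : Fin d → ℤ))) := by
    intro ℓ
    rw [Matrix.conjTranspose_apply]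
    show star (c * E (ip ((mR R)⁻¹.mulVec (vR b)) (vR (ℓ : Fin d → ℤ)))) *
        (c * E (ip ((mR R)⁻¹.mulVec (vR b')) (vR (ℓ : Fin d → ℤ)))) = _
    rw [star_mul', star_E, show star c = c by simp [hc]]
    rw [show ip ((mR R)⁻¹.mulVec (vR b' - vR b)) (vR (ℓ : Fin d → ℤ))
        = -(ip ((mR R)⁻¹.mulVec (vR b)) (vR (ℓ : Fin d → ℤ)))
          + ip ((mR R)⁻¹.mulVec (vR b')) (vR (ℓ : Fin d → ℤ)) by
      rw [ip_eq, ip_eq, ip_eq, Matrix.mulVec_sub, sub_dotProduct]; ring]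
    rw [E_add]; ring
  rw [Finset.sum_congr rfl (fun ℓ _ => hterm ℓ), ← Finset.mul_sum] at key
  have hc0 : c ^ 2 ≠ 0 := by
    simp only [hc]
    norm_cast
    positivity
  rw [mul_eq_zero] at key
  rcases key with hk | hk
  · exact absurd hk hc0
  · rw [← hk]
    exact (Finset.sum_coe_sort L _).symm

lemma simple (R : Matrix (Fin d) (Fin d) ℤ) (B L : Finset (Fin d → ℤ))
    (h : IsHadamardTriple R B L) (hdet : IsUnit (mR R).det) : SimpleDigits R B := by
  intro b hb b' hb' hk
  obtain ⟨kk, hkk⟩ := hk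
  by_contra hne
  have h0 := orth R B L h b' hb' b hb (Ne.symm hne)
  have hone : ∀ ℓ ∈ L, E (ip ((mR R)⁻¹.mulVec (vR b - vR b')) (vR ℓ)) = 1 := by
    intro ℓ _
    have hv : (mR R)⁻¹.mulVec (vR b - vR b') = vR kk := by
      rw [← vR_sub, hkk, vR_mulVec, Matrix.mulVec_mulVec,
        Matrix.nonsing_inv_mul _ hdet, Matrix.one_mulVec]
    rw [hv, ip_int]
    exact E_int _
  rw [Finset.sum_congr rfl hone, Finset.sum_const, nsmul_eq_mul, mul_one] at h0
  have hL : L.Nonempty := by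
    rw [← Finset.card_pos, ← h.1]
    exact Finset.card_pos.mpr ⟨b, hb⟩
  exact Nat.cast_ne_zero.mpr (Finset.card_pos.mpr hL).ne' h0

lemma beta_succ (R : Matrix (Fin d) (Fin d) ℤ) {n : ℕ} (b : Fin (n + 1) → (Fin d → ℤ)) :
    beta R b = b 0 + R.mulVec (beta R (fun j : Fin n => b j.succ)) := by
  unfold beta
  rw [Fin.sum_univ_succ]
  congr 1
  · simp
  · have hms := map_sum R.mulVecLin
        (fun j : Fin n => (R ^ (j : ℕ)).mulVec (b j.succ)) Finset.univ
    simp only [Matrix.mulVecLin_apply] at hms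
    rw [hms]
    refine Finset.sum_congr rfl fun j _ => ?_
    rw [Matrix.mulVec_mulVec, Fin.val_succ, pow_succ']

lemma beta_inj (R : Matrix (Fin d) (Fin d) ℤ) (B : Finset (Fin d → ℤ))
    (hs : SimpleDigits R B) (hinj : Function.Injective (fun v : Fin d → ℤ => R.mulVec v)) :
    ∀ n (b b' : Fin n → (Fin d → ℤ)), (∀ j, b j ∈ B) → (∀ j, b' j ∈ B) →
      beta R b = beta R b' → b = b' := by
  intro n
  induction n with
  | zero => intro b b' _ _ _; funext j; exact j.elim0
  | succ n ih =>
    intro b b' hb hb' heq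
    rw [beta_succ, beta_succ] at heq
    set β1 := beta R (fun j : Fin n => b j.succ) with hβ1
    set β2 := beta R (fun j : Fin n => b' j.succ) with hβ2
    have h0 : b 0 = b' 0 := by
      refine hs _ (hb 0) _ (hb' 0) ⟨β2 - β1, ?_⟩
      rw [Matrix.mulVec_sub]
      rw [sub_eq_sub_iff_add_eq_add]
      rw [heq]; ring
    have htail : (fun j : Fin n => b j.succ) = (fun j : Fin n => b' j.succ) := by
      apply ih _ _ (fun j => hb j.succ) (fun j => hb' j.succ)
      have : R.mulVec β1 = R.mulVec β2 := by
        have := heq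
        rw [h0] at this
        exact add_left_cancel this
      exact hinj this
    funext j
    refine Fin.cases ?_ ?_ j
    · exact h0
    · intro i; exact congrFun htail i

lemma Bk_card (R : Matrix (Fin d) (Fin d) ℤ) (B : Finset (Fin d → ℤ)) {k : ℕ}
    (hinj : ∀ (b b' : Fin k → (Fin d → ℤ)), (∀ j, b j ∈ B) → (∀ j, b' j ∈ B) →
      beta R b = beta R b' → b = b') :
    (Bk R B k).card = B.card ^ k := by
  rw [Bk, Finset.card_image_of_injOn, Fintype.card_piFinset]
  · simp
  · intro b hb b' hb' heq
    exact hinj b b' (fun j => Fintype.mem_piFinset.mp hb j)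
      (fun j => Fintype.mem_piFinset.mp hb' j) heq

lemma hadamard_transpose (R : Matrix (Fin d) (Fin d) ℤ) (B L : Finset (Fin d → ℤ))
    (h : IsHadamardTriple R B L) : IsHadamardTriple Rᵀ L B := by
  refine ⟨h.1.symm, ?_⟩
  set H := hMatrix R B L with hH
  have hHT : hMatrix Rᵀ L B = fun (b : {x // x ∈ B}) (ℓ : {x // x ∈ L}) => H ℓ b := by
    funext b ℓ
    show ((1 / Real.sqrt (L.card) : ℝ) : ℂ) *
        E (ip ((mR Rᵀ)⁻¹.mulVec (vR (ℓ : Fin d → ℤ))) (vR (b : Fin d → ℤ))) = _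
    rw [ip_transpose_inv, ← h.1]
    rfl
  -- First show H * Hᴴ = 1 from Hᴴ * H = 1 using equal cardinalities.
  have hcard : Fintype.card {x // x ∈ L} = Fintype.card {x // x ∈ B} := by
    rw [Fintype.card_coe, Fintype.card_coe, h.1]
  let e : {x // x ∈ B} ≃ {x // x ∈ L} := Fintype.equivOfCardEq hcard.symm
  have hK : (H.submatrix (⇑e) id)ᴴ * (H.submatrix (⇑e) id) = 1 := by
    rw [Matrix.conjTranspose_submatrix,
      Matrix.submatrix_mul_equiv Hᴴ H id e id, h.2, Matrix.submatrix_id_id]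
  have hK2 : (H.submatrix (⇑e) id) * (H.submatrix (⇑e) id)ᴴ = 1 :=
    mul_eq_one_comm.mp hK
  have hHHc : H * Hᴴ = 1 := by
    have h3 : (H * Hᴴ).submatrix (⇑e) (⇑e) = 1 := by
      rw [← Matrix.submatrix_mul_equiv H Hᴴ (⇑e) (Equiv.refl _) (⇑e)]
      simpa [Matrix.conjTranspose_submatrix] using hK2
    have h4 := congrArg (fun M => M.submatrix (⇑e.symm) (⇑e.symm)) h3
    simpa [Matrix.submatrix_submatrix, Equiv.self_comp_symm,
      Matrix.submatrix_one_equiv] using h4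
  -- Now transfer to the transpose matrix.
  have hmap : (hMatrix Rᵀ L B)ᴴ * (hMatrix Rᵀ L B)
      = (H * Hᴴ).map (starRingEnd ℂ) := by
    rw [hHT]
    ext ℓ ℓ'
    change (Hᵀᴴ * Hᵀ) ℓ ℓ' = _
    rw [Matrix.mul_apply, Matrix.map_apply, Matrix.mul_apply, map_sum]
    refine Finset.sum_congr rfl fun b _ => ?_
    rw [Matrix.conjTranspose_apply, Matrix.conjTranspose_apply]
    simp [mul_comm]
  rw [hmap, hHHc]
  exact Matrix.map_one _ (by simp) (by simp)

end HTaux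

/-- powers of a Hadamard triple are Hadamard triples. -/
theorem hadamard_triple_pow {d : ℕ} (R : Matrix (Fin d) (Fin d) ℤ)
    (hR : Expansive R) (B L : Finset (Fin d → ℤ))
    (h : IsHadamardTriple R B L) :
    ∀ k : ℕ, 1 ≤ k → IsHadamardTriple (R ^ k) (Bk R B k) (Bk Rᵀ L k) := by
  classical
  intro k hk
  by_cases hBe : B.Nonempty
  swap
  · -- degenerate empty case
    rw [Finset.not_nonempty_iff_eq_empty] at hBe
    have hL : L = ∅ := Finset.card_eq_zero.mp (by rw [← h.1, hBe]; simp)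
    have hpi : ∀ (S : Finset (Fin d → ℤ)), S = ∅ →
        Fintype.piFinset (fun _ : Fin k => S) = ∅ := by
      intro S hS
      rw [Finset.eq_empty_iff_forall_notMem]
      intro f hf
      exact absurd (Fintype.mem_piFinset.mp hf ⟨0, hk⟩) (by simp [hS])
    have hBk : Bk R B k = ∅ := by rw [Bk, hpi B hBe]; rfl
    have hLk : Bk Rᵀ L k = ∅ := by rw [Bk, hpi L hL]; rfl
    refine ⟨by rw [hBk, hLk], ?_⟩
    ext a b
    exact absurd a.2 (by simp [hBk])
  -- main case
  have hdet : IsUnit (mR R).det := HTaux.expansive_isUnit_det R hR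
  have hdetT : IsUnit (mR Rᵀ).det := by
    rw [HTaux.mR_transpose, Matrix.det_transpose]; exact hdet
  have hT : IsHadamardTriple Rᵀ L B := HTaux.hadamard_transpose R B L h
  have hsB : SimpleDigits R B := HTaux.simple R B L h hdet
  have hsL : SimpleDigits Rᵀ L := HTaux.simple Rᵀ L B hT hdetT
  have hinjB := HTaux.beta_inj R B hsB (HTaux.mulVec_int_injective R hdet)
  have hinjL := HTaux.beta_inj Rᵀ L hsL (HTaux.mulVec_int_injective Rᵀ hdetT)
  have hcardB : (Bk R B k).card = B.card ^ k := HTaux.Bk_card R B (hinjB k)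
  have hcardL : (Bk Rᵀ L k).card = L.card ^ k := HTaux.Bk_card Rᵀ L (hinjL k)
  have hNL : L.card = B.card := h.1.symm
  refine ⟨by rw [hcardB, hcardL, hNL], ?_⟩
  ext a a'
  set A := mR R with hA
  set M := mR (R ^ k) with hM
  set c : ℂ := ((1 / Real.sqrt ((Bk R B k).card) : ℝ) : ℂ) with hc
  set δ : Fin d → ℝ := vR (a' : Fin d → ℤ) - vR (a : Fin d → ℤ) with hδ
  -- Step 1: each term of the matrix product entry.
  have hterm : ∀ ℓ : {x // x ∈ Bk Rᵀ L k},
      (hMatrix (R ^ k) (Bk R B k) (Bk Rᵀ L k))ᴴ a ℓ *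
        hMatrix (R ^ k) (Bk R B k) (Bk Rᵀ L k) ℓ a'
      = c ^ 2 * HTaux.E (ip (M⁻¹.mulVec δ) (vR (ℓ : Fin d → ℤ))) := by
    intro ℓ
    rw [Matrix.conjTranspose_apply]
    show star (c * HTaux.E (ip (M⁻¹.mulVec (vR (a : Fin d → ℤ))) (vR (ℓ : Fin d → ℤ)))) *
      (c * HTaux.E (ip (M⁻¹.mulVec (vR (a' : Fin d → ℤ))) (vR (ℓ : Fin d → ℤ)))) = _
    rw [star_mul', HTaux.star_E, show star c = c by simp [hc]]
    rw [show ip (M⁻¹.mulVec δ) (vR (ℓ : Fin d → ℤ))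
        = -(ip (M⁻¹.mulVec (vR (a : Fin d → ℤ))) (vR (ℓ : Fin d → ℤ)))
          + ip (M⁻¹.mulVec (vR (a' : Fin d → ℤ))) (vR (ℓ : Fin d → ℤ)) by
      rw [hδ, HTaux.ip_eq, HTaux.ip_eq, HTaux.ip_eq, Matrix.mulVec_sub,
        sub_dotProduct]; ring]
    rw [HTaux.E_add]; ring
  rw [Matrix.mul_apply, Finset.sum_congr rfl (fun ℓ _ => hterm ℓ), ← Finset.mul_sum,
    Finset.sum_coe_sort (Bk Rᵀ L k)
      (fun ℓ => HTaux.E (ip (M⁻¹.mulVec δ) (vR ℓ)))]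
  -- Step 2: sum over the finset as a sum over words.
  have hL_inj : ∀ x ∈ Fintype.piFinset (fun _ : Fin k => L),
      ∀ y ∈ Fintype.piFinset (fun _ : Fin k => L), beta Rᵀ x = beta Rᵀ y → x = y := by
    intro x hx y hy hxy
    exact hinjL k x y (fun j => Fintype.mem_piFinset.mp hx j)
      (fun j => Fintype.mem_piFinset.mp hy j) hxy
  rw [show (∑ ℓ ∈ Bk Rᵀ L k, HTaux.E (ip (M⁻¹.mulVec δ) (vR ℓ)))
      = ∑ lw ∈ Fintype.piFinset (fun _ : Fin k => L),
          HTaux.E (ip (M⁻¹.mulVec δ) (vR (beta Rᵀ lw))) from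
    Finset.sum_image hL_inj]
  -- Step 3: factor each word term as a product.
  have hfac : ∀ lw ∈ Fintype.piFinset (fun _ : Fin k => L),
      HTaux.E (ip (M⁻¹.mulVec δ) (vR (beta Rᵀ lw)))
      = ∏ m : Fin k,
          HTaux.E (ip ((A ^ (m : ℕ)).mulVec (M⁻¹.mulVec δ)) (vR (lw m))) := by
    intro lw _
    have h1 : vR (beta Rᵀ lw) = ∑ m : Fin k, ((A ^ (m : ℕ))ᵀ).mulVec (vR (lw m)) := by
      rw [show beta Rᵀ lw = ∑ j : Fin k, ((Rᵀ) ^ (j : ℕ)).mulVec (lw j) from rfl,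
        HTaux.vR_sum]
      refine Finset.sum_congr rfl fun m _ => ?_
      rw [HTaux.vR_mulVec, HTaux.mR_pow, HTaux.mR_transpose, ← hA, ← Matrix.transpose_pow]
    rw [h1, HTaux.ip_sum_right, HTaux.E_sum]
    refine Finset.prod_congr rfl fun m _ => ?_
    rw [HTaux.ip_tmul]
  rw [Finset.sum_congr rfl hfac, ← Finset.prod_univ_sum (fun _ : Fin k => L)
    (fun m ℓ => HTaux.E (ip ((A ^ (m : ℕ)).mulVec (M⁻¹.mulVec δ)) (vR ℓ)))]
  -- Now case split on the diagonal.
  by_cases haa : a = a'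
  · rw [show (1 : Matrix {x // x ∈ Bk R B k} {x // x ∈ Bk R B k} ℂ) a a' = 1 by
      rw [haa]; exact Matrix.one_apply_eq a']
    have hδ0 : δ = 0 := by rw [hδ, haa, sub_self]
    simp only [hδ0, Matrix.mulVec_zero, HTaux.ip_eq, zero_dotProduct, HTaux.E_zero]
    rw [Finset.sum_const, Finset.prod_const, nsmul_eq_mul, mul_one,
      Finset.card_univ, Fintype.card_fin]
    rw [hc, hcardB, hNL]
    have hb0 : (0 : ℕ) < B.card := Finset.card_pos.mpr hBe
    have hsq : ((1 / Real.sqrt ((B.card ^ k : ℕ)) : ℝ)) ^ 2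
        = 1 / ((B.card : ℝ)) ^ k := by
      rw [div_pow, one_pow, Real.sq_sqrt (by positivity)]
      push_cast; ring
    rw [← Complex.ofReal_pow, hsq]
    have : ((B.card : ℝ)) ^ k ≠ 0 := by positivity
    push_cast
    field_simp
    exact div_self (pow_ne_zero k (Nat.cast_ne_zero.mpr hb0.ne'))
  · rw [Matrix.one_apply_ne haa]
    obtain ⟨aw, hawmem, hawa⟩ := Finset.mem_image.mp
      (show (a : Fin d → ℤ) ∈
        (Fintype.piFinset (fun _ : Fin k => B)).image (beta R) from a.2)
    obtain ⟨a'w, ha'wmem, ha'wa⟩ := Finset.mem_image.mp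
      (show (a' : Fin d → ℤ) ∈
        (Fintype.piFinset (fun _ : Fin k => B)).image (beta R) from a'.2)
    have hawB : ∀ j, aw j ∈ B := fun j => Fintype.mem_piFinset.mp hawmem j
    have ha'wB : ∀ j, a'w j ∈ B := fun j => Fintype.mem_piFinset.mp ha'wmem j
    have hne : aw ≠ a'w := fun e => haa (Subtype.ext (by rw [← hawa, ← ha'wa, e]))
    set s : Finset (Fin k) := Finset.univ.filter (fun j : Fin k => aw j ≠ a'w j)
      with hsdef
    have hs : s.Nonempty := by
      by_contra hsn
      rw [Finset.not_nonempty_iff_eq_empty] at hsn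
      apply hne; funext j
      by_contra hj
      have hmem : j ∈ s := Finset.mem_filter.mpr ⟨Finset.mem_univ j, hj⟩
      rw [hsn] at hmem
      exact absurd hmem (Finset.notMem_empty j)
    set j₀ := s.min' hs with hj₀def
    have hj₀ : aw j₀ ≠ a'w j₀ := (Finset.mem_filter.mp (s.min'_mem hs)).2
    have hmin : ∀ j : Fin k, j < j₀ → aw j = a'w j := by
      intro j hjlt
      by_contra hj
      exact absurd (s.min'_le j (Finset.mem_filter.mpr ⟨Finset.mem_univ j, hj⟩))
        (not_le.mpr hjlt)
    have hj₀k : (j₀ : ℕ) < k := j₀.2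
    set m₀ : Fin k := ⟨k - 1 - (j₀ : ℕ), by omega⟩ with hm₀def
    have hm₀ : (m₀ : ℕ) + (j₀ : ℕ) + 1 = k := by
      rw [hm₀def]; simp; omega
    apply mul_eq_zero_of_right
    apply Finset.prod_eq_zero (Finset.mem_univ m₀)
    -- unit structure
    have hAU : IsUnit A := (Matrix.isUnit_iff_isUnit_det A).mpr hdet
    obtain ⟨u, hu⟩ := hAU
    have hMu : M = ↑(u ^ k) := by
      rw [hM, HTaux.mR_pow, ← hA, ← hu, Units.val_pow_eq_pow_val]
    have hMinv : M⁻¹ = ↑((u ^ k)⁻¹) := by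
      rw [hMu, Matrix.nonsing_inv_eq_ringInverse, Ring.inverse_unit]
    have hkey : ∀ j : Fin k, A ^ (m₀ : ℕ) * M⁻¹ * A ^ (j : ℕ)
        = ↑(u ^ (((m₀ : ℕ) : ℤ) + ((j : ℕ) : ℤ) - (k : ℤ))) := by
      intro j
      rw [hMinv, ← hu, ← Units.val_pow_eq_pow_val, ← Units.val_pow_eq_pow_val,
        ← Units.val_mul, ← Units.val_mul]
      congr 1
      rw [← zpow_natCast u (m₀ : ℕ), ← zpow_natCast u (j : ℕ), ← zpow_natCast u k,
        ← _root_.zpow_neg, ← _root_.zpow_add, ← _root_.zpow_add]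
      congr 1; ring
    set cj : Fin k → (Fin d → ℝ) := fun j => vR (a'w j) - vR (aw j) with hcj
    have hbsum : ∀ w : Fin k → (Fin d → ℤ),
        vR (beta R w) = ∑ j : Fin k, (A ^ (j : ℕ)).mulVec (vR (w j)) := by
      intro w
      rw [show beta R w = ∑ j : Fin k, (R ^ (j : ℕ)).mulVec (w j) from rfl,
        HTaux.vR_sum]
      exact Finset.sum_congr rfl fun j _ => by
        rw [HTaux.vR_mulVec, HTaux.mR_pow, ← hA]
    have hδsum : δ = ∑ j : Fin k, (A ^ (j : ℕ)).mulVec (cj j) := by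
      rw [hδ, ← hawa, ← ha'wa, hbsum, hbsum, ← Finset.sum_sub_distrib]
      exact Finset.sum_congr rfl fun j _ => by
        rw [hcj, Matrix.mulVec_sub]
    have hwsum : (A ^ (m₀ : ℕ)).mulVec (M⁻¹.mulVec δ)
        = ∑ j : Fin k, (A ^ (m₀ : ℕ) * M⁻¹ * A ^ (j : ℕ)).mulVec (cj j) := by
      rw [Matrix.mulVec_mulVec, hδsum]
      have h5 := map_sum ((A ^ (m₀ : ℕ) * M⁻¹).mulVecLin)
        (fun j : Fin k => (A ^ (j : ℕ)).mulVec (cj j)) Finset.univ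
      simp only [Matrix.mulVecLin_apply] at h5
      rw [h5]
      exact Finset.sum_congr rfl fun j _ => by
        rw [Matrix.mulVec_mulVec, Matrix.mul_assoc]
    set z : Fin k → (Fin d → ℤ) := fun j =>
      if (j : ℕ) < (j₀ : ℕ) then 0
      else (R ^ ((j : ℕ) - (j₀ : ℕ) - 1)).mulVec (a'w j - aw j) with hz
    have herase : ∀ j ∈ Finset.univ.erase j₀,
        (A ^ (m₀ : ℕ) * M⁻¹ * A ^ (j : ℕ)).mulVec (cj j) = vR (z j) := by
      intro j hj
      have hjne : j ≠ j₀ := (Finset.mem_erase.mp hj).1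
      have hvne : (j : ℕ) ≠ (j₀ : ℕ) := fun e => hjne (Fin.ext e)
      by_cases hlt : (j : ℕ) < (j₀ : ℕ)
      · have hc0 : cj j = 0 := by
          rw [hcj]
          simp only [hmin j (by exact hlt), sub_self]
        have hzj : z j = 0 := by
          simp only [hz]
          rw [if_pos hlt]
        rw [hc0, Matrix.mulVec_zero, hzj, HTaux.vR_zero]
      · have hgt : (j₀ : ℕ) < (j : ℕ) := by omega
        have hexp : ((m₀ : ℕ) : ℤ) + ((j : ℕ) : ℤ) - (k : ℤ)
            = (((j : ℕ) - (j₀ : ℕ) - 1 : ℕ) : ℤ) := by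
          push_cast [Nat.cast_sub, hgt]
          omega
        have hcjj : cj j = vR (a'w j - aw j) := by
          simp only [hcj, HTaux.vR_sub]
        have hzj : z j = (R ^ ((j : ℕ) - (j₀ : ℕ) - 1)).mulVec (a'w j - aw j) := by
          simp only [hz]
          rw [if_neg (not_lt.mpr hgt.le)]
        rw [hkey j, hexp, zpow_natCast, Units.val_pow_eq_pow_val, hu, hA, hcjj,
          ← HTaux.mR_pow, ← HTaux.vR_mulVec, hzj]
    have hmain : (A ^ (m₀ : ℕ) * M⁻¹ * A ^ ((j₀ : Fin k) : ℕ)).mulVec (cj j₀)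
        = A⁻¹.mulVec (cj j₀) := by
      have hexp : ((m₀ : ℕ) : ℤ) + ((j₀ : ℕ) : ℤ) - (k : ℤ) = -1 := by
        push_cast; omega
      rw [hkey j₀, hexp, _root_.zpow_neg_one]
      rw [show A⁻¹ = Ring.inverse A from Matrix.nonsing_inv_eq_ringInverse A,
        ← hu, Ring.inverse_unit]
    have hw : (A ^ (m₀ : ℕ)).mulVec (M⁻¹.mulVec δ)
        = A⁻¹.mulVec (cj j₀) + vR (∑ j ∈ Finset.univ.erase j₀, z j) := by
      rw [hwsum, ← Finset.add_sum_erase _ _ (Finset.mem_univ j₀), hmain,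
        HTaux.vR_sum]
      congr 1
      exact Finset.sum_congr rfl herase
    have hzero := HTaux.orth R B L h (aw j₀) (hawB j₀) (a'w j₀) (ha'wB j₀) hj₀
    calc ∑ ℓ ∈ L, HTaux.E (ip ((A ^ (m₀ : ℕ)).mulVec (M⁻¹.mulVec δ)) (vR ℓ))
        = ∑ ℓ ∈ L, HTaux.E (ip ((mR R)⁻¹.mulVec (vR (a'w j₀) - vR (aw j₀))) (vR ℓ)) := by
          refine Finset.sum_congr rfl fun ℓ hℓ => ?_
          rw [hw, HTaux.ip_eq, add_dotProduct, ← HTaux.ip_eq, ← HTaux.ip_eq,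
            HTaux.ip_int, HTaux.E_add, HTaux.E_int, mul_one, hcj, hA]
      _ = 0 := hzero
end
end

section
/- Let (R,B,L) be a Hadamard triple and u_B(x) = |(1/N)Σ_{b∈B} e^{2πi⟨b,x⟩}|². Then the set 𝒵 = {ξ ∈ ℝ^d : μ̂(ξ+k) = 0 for all k ∈ ℤ^d} is u_B-invariant with respect to any complete set of representatives 𝓛 mod R^T(ℤ^d): if x ∈ 𝒵, ℓ ∈ 𝓛 and u_B((R^T)^{-1}(x+ℓ)) > 0, then (R^T)^{-1}(x+ℓ) ∈ 𝒵. -/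
open scoped BigOperators ENNReal
open Matrix MeasureTheory

noncomputable section

section Helpers

variable {d : ℕ}

lemma ip_comm (x y : Fin d → ℝ) : ip x y = ip y x := by
  unfold ip; exact Finset.sum_congr rfl fun i _ => mul_comm _ _

lemma ip_eq_dot (x y : Fin d → ℝ) : ip x y = dotProduct x y := rfl

lemma ip_add_right (x y z : Fin d → ℝ) : ip x (y + z) = ip x y + ip x z := by
  unfold ip; rw [← Finset.sum_add_distrib]
  exact Finset.sum_congr rfl fun i _ => by simp [mul_add]

lemma vR_mulVec (M : Matrix (Fin d) (Fin d) ℤ) (v : Fin d → ℤ) :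
    vR (M.mulVec v) = (mR M).mulVec (vR v) := by
  funext i
  simp [vR, mR, Matrix.mulVec, dotProduct]

lemma vR_add (a b : Fin d → ℤ) : vR (a + b) = vR a + vR b := by
  funext i; simp [vR]

lemma mR_transpose (M : Matrix (Fin d) (Fin d) ℤ) : mR Mᵀ = (mR M)ᵀ := by
  simp [mR, Matrix.transpose_map]

lemma det_ne_zero_of_expansive {R : Matrix (Fin d) (Fin d) ℤ} (hR : Expansive R) :
    (mR R).det ≠ 0 := by
  intro h
  have hdetR : (R.det : ℝ) = 0 := by
    rw [← h]
    have := (Int.castRingHom ℝ).map_det R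
    simpa [mR, RingHom.mapMatrix_apply, Int.coe_castRingHom] using this
  have hdetZ : R.det = 0 := by exact_mod_cast hdetR
  have hdetC : (R.map (Int.cast : ℤ → ℂ)).det = 0 := by
    have := (Int.castRingHom ℂ).map_det R
    simp only [RingHom.mapMatrix_apply, Int.coe_castRingHom] at this
    rw [← this, hdetZ]; simp
  have : ¬ IsUnit (R.map (Int.cast : ℤ → ℂ)) := by
    rw [Matrix.isUnit_iff_isUnit_det, hdetC]
    simp [isUnit_iff_ne_zero]
  have h0 : (0 : ℂ) ∈ spectrum ℂ (R.map (Int.cast : ℤ → ℂ)) :=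
    (spectrum.zero_mem_iff ℂ).mpr this
  have := hR 0 h0
  norm_num at this

/-- exp of -2πi times a real is of norm one. -/
lemma norm_character (r : ℝ) :
    ‖Complex.exp (-(2 * (Real.pi : ℂ) * Complex.I * (r : ℂ)))‖ = 1 := by
  have : (-(2 * (Real.pi : ℂ) * Complex.I * (r : ℂ))) = ((-(2 * Real.pi * r) : ℝ) : ℂ) * Complex.I := by
    push_cast; ring
  rw [this]
  exact Complex.norm_exp_ofReal_mul_I _

lemma character_int (m : ℤ) :
    Complex.exp (-(2 * (Real.pi : ℂ) * Complex.I * ((m : ℝ) : ℂ))) = 1 := by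
  have : (-(2 * (Real.pi : ℂ) * Complex.I * ((m : ℝ) : ℂ))) = ((-m : ℤ) : ℂ) * (2 * (Real.pi : ℂ) * Complex.I) := by
    push_cast; ring
  rw [this]
  exact Complex.exp_int_mul_two_pi_mul_I _

lemma character_continuous (ξ : Fin d → ℝ) :
    Continuous (fun x : Fin d → ℝ => Complex.exp (-(2 * (Real.pi : ℂ) * Complex.I * ((ip ξ x : ℝ) : ℂ)))) := by
  apply Complex.continuous_exp.comp
  apply Continuous.neg
  apply Continuous.mul continuous_const
  apply Continuous.comp Complex.continuous_ofReal
  unfold ip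
  exact continuous_finset_sum _ fun i _ => (continuous_const.mul (continuous_apply i))

lemma character_integrable (ξ : Fin d → ℝ) (ν : MeasureTheory.Measure (Fin d → ℝ))
    [MeasureTheory.IsFiniteMeasure ν] :
    MeasureTheory.Integrable (fun x : Fin d → ℝ =>
      Complex.exp (-(2 * (Real.pi : ℂ) * Complex.I * ((ip ξ x : ℝ) : ℂ)))) ν := by
  apply MeasureTheory.Integrable.mono' (MeasureTheory.integrable_const (1 : ℝ))
    (character_continuous ξ).aestronglyMeasurable
  filter_upwards with x
  rw [norm_character]

end Helpers

section Transfer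

variable {d : ℕ}

lemma tau_continuous (R : Matrix (Fin d) (Fin d) ℤ) (b : Fin d → ℤ) :
    Continuous (tau R b) := by
  unfold tau
  apply continuous_pi
  intro i
  unfold Matrix.mulVec dotProduct
  exact continuous_finset_sum _ fun j _ =>
    continuous_const.mul (((continuous_apply j).add continuous_const))

lemma ip_tau (R : Matrix (Fin d) (Fin d) ℤ) (hdet : (mR R).det ≠ 0)
    (b : Fin d → ℤ) (ξ x : Fin d → ℝ) :
    ip ξ (tau R b x) = ip ((mR Rᵀ)⁻¹.mulVec ξ) x + ip ((mR Rᵀ)⁻¹.mulVec ξ) (vR b) := by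
  have h1 : (mR Rᵀ)⁻¹ = ((mR R)⁻¹)ᵀ := by
    rw [mR_transpose, ← Matrix.transpose_nonsing_inv]
  rw [ip_eq_dot, tau, Matrix.dotProduct_mulVec, ← Matrix.mulVec_transpose, ← h1,
    dotProduct_add]
  rfl

lemma ft_transfer {R : Matrix (Fin d) (Fin d) ℤ} {B : Finset (Fin d → ℤ)}
    {μ : Measure (Fin d → ℝ)} [IsProbabilityMeasure μ]
    (hdet : (mR R).det ≠ 0) (hμ : IsSelfAffine R B μ) (ξ : Fin d → ℝ) :
    ft μ ξ = ((B.card : ℂ)⁻¹ * ∑ b ∈ B, Complex.exp (-(2 * (Real.pi : ℂ) * Complex.I *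
        ((ip (vR b) ((mR Rᵀ)⁻¹.mulVec ξ) : ℝ) : ℂ)))) * ft μ ((mR Rᵀ)⁻¹.mulVec ξ) := by
  set y := (mR Rᵀ)⁻¹.mulVec ξ with hy
  have hmeas : ∀ b : Fin d → ℤ, AEMeasurable (tau R b) μ :=
    fun b => (tau_continuous R b).measurable.aemeasurable
  haveI : ∀ b : Fin d → ℤ, IsProbabilityMeasure (μ.map (tau R b)) :=
    fun b => Measure.isProbabilityMeasure_map (hmeas b)
  have h1 : ft μ ξ = (B.card : ℝ)⁻¹ •
      ∑ b ∈ B, ∫ x, Complex.exp (-(2 * (Real.pi : ℂ) * Complex.I *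
        ((ip ξ (tau R b x) : ℝ) : ℂ))) ∂μ := by
    rw [ft]
    conv_lhs => rw [hμ]
    rw [integral_smul_measure, integral_finset_sum_measure
      (fun b _ => character_integrable ξ (μ.map (tau R b)))]
    congr 1
    · simp [ENNReal.toReal_inv]
    · exact Finset.sum_congr rfl fun b _ => integral_map (hmeas b)
        (character_continuous ξ).aestronglyMeasurable
  have h2 : ∀ b : Fin d → ℤ, ∀ x : Fin d → ℝ,
      Complex.exp (-(2 * (Real.pi : ℂ) * Complex.I * ((ip ξ (tau R b x) : ℝ) : ℂ))) =
      Complex.exp (-(2 * (Real.pi : ℂ) * Complex.I * ((ip (vR b) y : ℝ) : ℂ))) *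
      Complex.exp (-(2 * (Real.pi : ℂ) * Complex.I * ((ip y x : ℝ) : ℂ))) := by
    intro b x
    rw [ip_tau R hdet b ξ x, ← Complex.exp_add, ip_comm (vR b) y]
    congr 1
    push_cast
    ring
  rw [h1]
  have h3 : ∀ b ∈ B, (∫ x, Complex.exp (-(2 * (Real.pi : ℂ) * Complex.I *
      ((ip ξ (tau R b x) : ℝ) : ℂ))) ∂μ) =
      Complex.exp (-(2 * (Real.pi : ℂ) * Complex.I * ((ip (vR b) y : ℝ) : ℂ))) * ft μ y := by
    intro b _
    simp_rw [h2 b]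
    rw [integral_const_mul]
    rfl
  rw [Finset.sum_congr rfl h3, ← Finset.sum_mul, Complex.real_smul]
  push_cast
  ring

end Transfer

/-- the set 𝒵 is u_B-invariant. -/
theorem Z_is_uB_invariant {d : ℕ} (R : Matrix (Fin d) (Fin d) ℤ)
    (hR : Expansive R) (B L : Finset (Fin d → ℤ)) (hH : IsHadamardTriple R B L)
    (μ : Measure (Fin d → ℝ)) [IsProbabilityMeasure μ] (hμ : IsSelfAffine R B μ)
    (Lbar : Finset (Fin d → ℤ)) (hLbar : CompleteResidues Rᵀ Lbar) :
    ∀ x : Fin d → ℝ, (∀ k : Fin d → ℤ, ft μ (x + vR k) = 0) →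
      ∀ ℓ ∈ Lbar, 0 < uB B ((mR Rᵀ)⁻¹.mulVec (x + vR ℓ)) →
        ∀ k : Fin d → ℤ, ft μ ((mR Rᵀ)⁻¹.mulVec (x + vR ℓ) + vR k) = 0 := by
  intro x hx ℓ hℓ hu k
  have hdet : (mR R).det ≠ 0 := det_ne_zero_of_expansive hR
  have hdetT : IsUnit (mR Rᵀ).det := by
    rw [mR_transpose, Matrix.det_transpose]; exact isUnit_iff_ne_zero.mpr hdet
  set y := (mR Rᵀ)⁻¹.mulVec (x + vR ℓ) with hy
  set ξ := x + vR (ℓ + Rᵀ.mulVec k) with hξ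
  have h0 : ft μ ξ = 0 := hx _
  have hinv : (mR Rᵀ)⁻¹.mulVec ξ = y + vR k := by
    rw [hξ, vR_add, vR_mulVec, ← add_assoc, Matrix.mulVec_add, Matrix.mulVec_mulVec,
      Matrix.nonsing_inv_mul _ hdetT, Matrix.one_mulVec, hy]
  have htrans := ft_transfer hdet hμ ξ
  rw [hinv, h0] at htrans
  have hper : ∀ b : Fin d → ℤ,
      Complex.exp (-(2 * (Real.pi : ℂ) * Complex.I * ((ip (vR b) (y + vR k) : ℝ) : ℂ))) =
      Complex.exp (-(2 * (Real.pi : ℂ) * Complex.I * ((ip (vR b) y : ℝ) : ℂ))) := by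
    intro b
    rw [ip_add_right]
    obtain ⟨m, hm⟩ : ∃ m : ℤ, ip (vR b) (vR k) = (m : ℝ) :=
      ⟨∑ i, b i * k i, by unfold ip vR; push_cast; rfl⟩
    rw [hm, show (-(2 * (Real.pi : ℂ) * Complex.I * (((ip (vR b) y + (m : ℝ)) : ℝ) : ℂ))) =
        -(2 * (Real.pi : ℂ) * Complex.I * ((ip (vR b) y : ℝ) : ℂ)) +
        -(2 * (Real.pi : ℂ) * Complex.I * ((m : ℝ) : ℂ)) by push_cast; ring,
      Complex.exp_add, character_int, mul_one]
  rw [Finset.sum_congr rfl (fun b _ => hper b)] at htrans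
  set c := (B.card : ℂ)⁻¹ * ∑ b ∈ B, Complex.exp (-(2 * (Real.pi : ℂ) * Complex.I *
      ((ip (vR b) y : ℝ) : ℂ))) with hc
  have hconj : c = (starRingEnd ℂ) ((B.card : ℂ)⁻¹ * ∑ b ∈ B,
      Complex.exp (2 * (Real.pi : ℂ) * Complex.I * ((ip (vR b) y : ℝ) : ℂ))) := by
    rw [_root_.map_mul, map_inv₀, Complex.conj_natCast, _root_.map_sum, hc]
    congr 1
    refine Finset.sum_congr rfl fun b _ => ?_
    rw [← Complex.exp_conj]
    congr 1
    simp only [_root_.map_mul, map_ofNat, Complex.conj_I, Complex.conj_ofReal]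
    ring
  have hcnorm : ‖c‖ ^ 2 = uB B y := by rw [hconj, RCLike.norm_conj]; rfl
  have hcne : c ≠ 0 := by
    intro h
    rw [h] at hcnorm
    simp at hcnorm
    rw [← hcnorm] at hu
    exact lt_irrefl _ hu
  have := (mul_eq_zero.mp htrans.symm).resolve_left hcne
  exact this
end
end
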